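/- Re-rooting lemma: let g : [0,1] → [0,∞) be continuous with g(0) = g(1) = 0, and fix s_0 ∈ [0,1]. Define g'(s) = g(s_0) + g(\overline{s_0+s}) − 2 m_g(s_0, \overline{s_0+s}), where \overline{r} denotes the fractional part of r and m_g(a,b) = inf over the interval between a and b of g. Then g' is continuous with g'(0) = g'(1) = 0, and for all s, t ∈ [0,1] one has d_{g'}(s,t) = d_g(\overline{s_0+s}, \overline{s_0+t}). Consequently there is a unique isometry R from T_{g'} onto T_g with R(p_{g'}(s)) = p_g(\overline{s_0+s}) for every s. -/

import Mathlib

open Set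

/-- `m_g(s,t) = inf_{r ∈ [s∧t, s∨t]} g(r)`. -/
noncomputable def mOf (g : ℝ → ℝ) (s t : ℝ) : ℝ := sInf (g '' Icc (min s t) (max s t))

/-- `d_g(s,t) = g(s) + g(t) - 2 m_g(s,t)`. -/
noncomputable def dOf (g : ℝ → ℝ) (s t : ℝ) : ℝ := g s + g t - 2 * mOf g s t

lemma mOf_comm (g : ℝ → ℝ) (s t : ℝ) : mOf g s t = mOf g t s := by
  unfold mOf; rw [min_comm, max_comm]

lemma dOf_comm (g : ℝ → ℝ) (s t : ℝ) : dOf g s t = dOf g t s := by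
  unfold dOf; rw [mOf_comm]; ring

lemma mOf_isLeast (g : ℝ → ℝ) {x y : ℝ} (hxy : x ≤ y) (hc : ContinuousOn g (Icc x y)) :
    IsLeast (g '' Icc x y) (mOf g x y) := by
  obtain ⟨v, hv, hvmin⟩ := isCompact_Icc.exists_isMinOn (nonempty_Icc.mpr hxy) hc
  have hL : IsLeast (g '' Icc x y) (g v) :=
    ⟨mem_image_of_mem g hv, by rintro z ⟨u, hu, rfl⟩; exact hvmin hu⟩
  have : mOf g x y = g v := by
    unfold mOf; rw [min_eq_left hxy, max_eq_right hxy, hL.csInf_eq]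
  rw [this]; exact hL

lemma mOf_le (g : ℝ → ℝ) {x y u : ℝ} (hxy : x ≤ y) (hc : ContinuousOn g (Icc x y))
    (hu : u ∈ Icc x y) : mOf g x y ≤ g u :=
  (mOf_isLeast g hxy hc).2 (mem_image_of_mem g hu)

lemma mOf_self (g : ℝ → ℝ) (x : ℝ) : mOf g x x = g x := by
  unfold mOf; rw [min_self, max_self, Icc_self, image_singleton, csInf_singleton]

lemma mOf_minmax (g : ℝ → ℝ) (a b : ℝ) : mOf g (min a b) (max a b) = mOf g a b := by
  unfold mOf; rw [min_eq_left min_le_max, max_eq_right min_le_max]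

lemma mOf_le' (g : ℝ → ℝ) {a b u : ℝ} (hc : ContinuousOn g (Icc (min a b) (max a b)))
    (hu : u ∈ Icc (min a b) (max a b)) : mOf g a b ≤ g u := by
  rw [← mOf_minmax]; exact mOf_le g min_le_max hc hu

lemma mOf_mem (g : ℝ → ℝ) (a b : ℝ) (hc : ContinuousOn g (Icc (min a b) (max a b))) :
    mOf g a b ∈ g '' Icc (min a b) (max a b) := by
  rw [← mOf_minmax]; exact (mOf_isLeast g min_le_max hc).1

lemma mOf_mono (g : ℝ → ℝ) {x x' y' y : ℝ} (hx : x ≤ x') (h' : x' ≤ y') (hy : y' ≤ y)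
    (hc : ContinuousOn g (Icc x y)) : mOf g x y ≤ mOf g x' y' := by
  obtain ⟨u, hu, heq⟩ := (mOf_isLeast g h' (hc.mono (Icc_subset_Icc hx hy))).1
  rw [← heq]
  exact mOf_le g (hx.trans (h'.trans hy)) hc ⟨hx.trans hu.1, hu.2.trans hy⟩

lemma mOf_split (g : ℝ → ℝ) {x y z : ℝ} (hxy : x ≤ y) (hyz : y ≤ z)
    (hc : ContinuousOn g (Icc x z)) : mOf g x z = min (mOf g x y) (mOf g y z) := by
  have h1 := mOf_isLeast g hxy (hc.mono (Icc_subset_Icc le_rfl hyz))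
  have h2 := mOf_isLeast g hyz (hc.mono (Icc_subset_Icc hxy le_rfl))
  have h3 := mOf_isLeast g (hxy.trans hyz) hc
  refine h3.unique ?_
  rw [← Icc_union_Icc_eq_Icc hxy hyz, image_union]
  exact h1.union h2

lemma isLeast_image_add {f : ℝ → ℝ} {S : Set ℝ} {a K : ℝ} (h : IsLeast (f '' S) a) :
    IsLeast ((fun u => K + f u) '' S) (K + a) := by
  obtain ⟨u, hu, hfu⟩ := h.1
  refine ⟨⟨u, hu, by simp only []; rw [hfu]⟩, ?_⟩
  rintro z ⟨w, hw, rfl⟩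
  have := h.2 (mem_image_of_mem f hw)
  simpa using add_le_add_left this K

lemma lemmaA (g : ℝ → ℝ) {x y M : ℝ} (hxy : x ≤ y) (hc : ContinuousOn g (Icc x y))
    (hM : M ≤ g x) :
    IsLeast ((fun u => g u - 2 * min M (mOf g x u)) '' Icc x y)
      (mOf g x y - M - min M (mOf g x y)) := by
  set c := mOf g x y with hcdef
  have hlow : ∀ u ∈ Icc x y, c - M - min M c ≤ g u - 2 * min M (mOf g x u) := by
    intro u hu
    have hcu : ContinuousOn g (Icc x u) := hc.mono (Icc_subset_Icc le_rfl hu.2)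
    have h1 : mOf g x u ≤ g u := mOf_le g hu.1 hcu (right_mem_Icc.mpr hu.1)
    have h2 : c ≤ mOf g x u := mOf_mono g le_rfl hu.1 hu.2 hc
    rcases le_total M c with h | h
    · rw [min_eq_left h, min_eq_left (h.trans h2)]; linarith
    · rw [min_eq_right h]
      have h3 := min_le_left M (mOf g x u)
      have h4 := min_le_right M (mOf g x u)
      linarith
  refine ⟨?_, by rintro z ⟨u, hu, rfl⟩; exact hlow u hu⟩
  obtain ⟨v, hv, hgv⟩ := (mOf_isLeast g hxy hc).1
  rcases le_total M c with h | h
  · refine ⟨v, hv, ?_⟩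
    have h2 : c ≤ mOf g x v := mOf_mono g le_rfl hv.1 hv.2 hc
    simp only []
    rw [min_eq_left (h.trans h2), min_eq_left h, hgv]
    ring
  · -- c ≤ M
    set S : Set ℝ := Icc x v ∩ g ⁻¹' Iic M with hSdef
    have hcv : ContinuousOn g (Icc x v) := hc.mono (Icc_subset_Icc le_rfl hv.2)
    have hSclosed : IsClosed S :=
      hcv.preimage_isClosed_of_isClosed isClosed_Icc isClosed_Iic
    have hvS : v ∈ S := ⟨right_mem_Icc.mpr hv.1, by simp [hgv]; exact h⟩
    have hSbdd : BddBelow S := ⟨x, fun u hu => hu.1.1⟩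
    set w := sInf S with hwdef
    have hwS : w ∈ S := hSclosed.csInf_mem ⟨v, hvS⟩ hSbdd
    have hxw : x ≤ w := hwS.1.1
    have hwv : w ≤ v := hwS.1.2
    have hgwM : g w ≤ M := hwS.2
    have hgtM : ∀ u, x ≤ u → u < w → M < g u := by
      intro u h1 h2
      by_contra hle
      push_neg at hle
      exact absurd (csInf_le hSbdd ⟨⟨h1, h2.le.trans hwv⟩, hle⟩) (not_le.mpr h2)
    have hMgw : M ≤ g w := by
      rcases eq_or_lt_of_le hxw with he | hlt
      · rw [← he]; exact hM
      · haveI hne : (nhdsWithin w (Ioo x w)).NeBot :=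
          mem_closure_iff_nhdsWithin_neBot.mp
            (by rw [closure_Ioo hlt.ne]; exact ⟨hlt.le, le_rfl⟩)
        have htend : Filter.Tendsto g (nhdsWithin w (Ioo x w)) (nhds (g w)) := by
          have hcw : ContinuousWithinAt g (Icc x y) w := hc w ⟨hxw, hwv.trans hv.2⟩
          exact hcw.mono (fun u hu => ⟨hu.1.le, hu.2.le.trans (hwv.trans hv.2)⟩)
        refine ge_of_tendsto htend ?_
        filter_upwards [self_mem_nhdsWithin] with u hu
        exact (hgtM u hu.1.le hu.2).le
    have hgw : g w = M := le_antisymm hgwM hMgw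
    have hmxw : mOf g x w = M := by
      refine (mOf_isLeast g hxw (hc.mono (Icc_subset_Icc le_rfl (hwv.trans hv.2)))).unique ?_
      constructor
      · exact ⟨w, right_mem_Icc.mpr hxw, hgw⟩
      · rintro z ⟨u, hu, rfl⟩
        rcases eq_or_lt_of_le hu.2 with he | hlt
        · rw [he, hgw]
        · exact (hgtM u hu.1 hlt).le
    refine ⟨w, ⟨hxw, hwv.trans hv.2⟩, ?_⟩
    simp only []
    rw [hmxw, min_self, min_eq_right h, hgw]
    ring

lemma image_reflect (g : ℝ → ℝ) (k a b : ℝ) :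
    (fun v => g (k - v)) '' Icc a b = g '' Icc (k - b) (k - a) := by
  rw [← image_const_sub_Icc, image_image]

lemma mOf_reflect (g : ℝ → ℝ) (k : ℝ) {a b : ℝ} (hab : a ≤ b) :
    mOf (fun v => g (k - v)) a b = mOf g (k - b) (k - a) := by
  unfold mOf
  rw [min_eq_left hab, max_eq_right hab,
    min_eq_left (by linarith : k - b ≤ k - a), max_eq_right (by linarith : k - b ≤ k - a),
    image_reflect]

lemma lemmaA' (g : ℝ → ℝ) {x y M : ℝ} (hxy : x ≤ y) (hc : ContinuousOn g (Icc x y))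
    (hM : M ≤ g y) :
    IsLeast ((fun u => g u - 2 * min M (mOf g u y)) '' Icc x y)
      (mOf g x y - M - min M (mOf g x y)) := by
  set k := x + y with hk
  have hky : k - y = x := by rw [hk]; ring
  have hkx : k - x = y := by rw [hk]; ring
  have hhc : ContinuousOn (fun v => g (k - v)) (Icc x y) := by
    refine hc.comp ((continuous_const.sub continuous_id).continuousOn) ?_
    intro v hv
    simp only [mem_Icc, id_eq]; constructor <;> linarith [hv.1, hv.2]
  have hx' : M ≤ (fun v => g (k - v)) x := by simpa [hkx] using hM
  have hA := lemmaA (fun v => g (k - v)) hxy hhc hx'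
  have hval : mOf (fun v => g (k - v)) x y = mOf g x y := by
    rw [mOf_reflect g k hxy, hky, hkx]
  rw [hval] at hA
  have hset : ((fun u => (fun v => g (k - v)) u - 2 * min M (mOf (fun v => g (k - v)) x u)) '' Icc x y)
      = ((fun u => g u - 2 * min M (mOf g u y)) '' Icc x y) := by
    have h1 : ∀ u ∈ Icc x y,
        (fun u => (fun v => g (k - v)) u - 2 * min M (mOf (fun v => g (k - v)) x u)) u
        = ((fun u => g u - 2 * min M (mOf g u y)) ∘ (fun u => k - u)) u := by
      intro u hu
      have hm : mOf (fun v => g (k - v)) x u = mOf g (k - u) y := by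
        rw [mOf_reflect g k hu.1, hkx]
      simp only [Function.comp, hm]
    rw [image_congr h1, image_comp, image_const_sub_Icc, hky, hkx]
  rw [hset] at hA
  exact hA

/-- Re-rooting lemma. Let `g : [0,1] → [0,∞)` be continuous with `g 0 = g 1 = 0`, fix
`s₀ ∈ [0,1]`, and set `g'(s) = g(s₀) + g(frac(s₀+s)) - 2 m_g(s₀, frac(s₀+s))` where
`frac` is the fractional part. Then `g'` is continuous on `[0,1]` with `g' 0 = g' 1 = 0`,
`d_{g'}(s,t) = d_g(frac(s₀+s), frac(s₀+t))` for all `s, t ∈ [0,1]`, and there is a unique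
isometry `R` from `T_{g'}` onto `T_g` (the coded trees being represented by metric spaces
`T', T` with projections `p', p`) with `R (p' s) = p (frac (s₀+s))` for every `s`. -/
theorem rerooting_lemma (g : ℝ → ℝ)
    (hcont : ContinuousOn g (Icc 0 1)) (hpos : ∀ t ∈ Icc (0 : ℝ) 1, 0 ≤ g t)
    (h0 : g 0 = 0) (h1 : g 1 = 0) (s₀ : ℝ) (hs₀ : s₀ ∈ Icc (0 : ℝ) 1)
    (g' : ℝ → ℝ)
    (hg' : ∀ s, g' s = g s₀ + g (Int.fract (s₀ + s)) - 2 * mOf g s₀ (Int.fract (s₀ + s)))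
    (T : Type*) [MetricSpace T] (p : Icc (0 : ℝ) 1 → T)
    (hsurj : Function.Surjective p)
    (hdist : ∀ s t : Icc (0 : ℝ) 1, dist (p s) (p t) = dOf g s t)
    (T' : Type*) [MetricSpace T'] (p' : Icc (0 : ℝ) 1 → T')
    (hsurj' : Function.Surjective p')
    (hdist' : ∀ s t : Icc (0 : ℝ) 1, dist (p' s) (p' t) = dOf g' s t) :
    (ContinuousOn g' (Icc 0 1) ∧ g' 0 = 0 ∧ g' 1 = 0) ∧
    (∀ s ∈ Icc (0 : ℝ) 1, ∀ t ∈ Icc (0 : ℝ) 1,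
      dOf g' s t = dOf g (Int.fract (s₀ + s)) (Int.fract (s₀ + t))) ∧
    (∃! R : T' → T, Isometry R ∧ Function.Surjective R ∧
      ∀ s : Icc (0 : ℝ) 1,
        R (p' s) = p ⟨Int.fract (s₀ + ↑s),
          ⟨Int.fract_nonneg _, (Int.fract_lt_one _).le⟩⟩) := by
  classical
  have hs00 : 0 ≤ s₀ := hs₀.1
  have hs01 : s₀ ≤ 1 := hs₀.2
  have hm0x : ∀ x : ℝ, 0 ≤ x → x ≤ 1 → mOf g 0 x = 0 := by
    intro x hx0 hx1
    refine ((mOf_isLeast g hx0 (hcont.mono (Icc_subset_Icc le_rfl hx1))).unique ?_)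
    exact ⟨⟨0, ⟨le_rfl, hx0⟩, h0⟩, by rintro z ⟨u, hu, rfl⟩; exact hpos u ⟨hu.1, hu.2.trans hx1⟩⟩
  have hmx1 : ∀ x : ℝ, 0 ≤ x → x ≤ 1 → mOf g x 1 = 0 := by
    intro x hx0 hx1
    refine ((mOf_isLeast g hx1 (hcont.mono (Icc_subset_Icc hx0 le_rfl))).unique ?_)
    exact ⟨⟨1, ⟨hx1, le_rfl⟩, h1⟩, by rintro z ⟨u, hu, rfl⟩; exact hpos u ⟨hx0.trans hu.1, hu.2⟩⟩
  have hmnn : ∀ x y : ℝ, 0 ≤ x → x ≤ y → y ≤ 1 → 0 ≤ mOf g x y := by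
    intro x y hx hxy hy
    obtain ⟨u, hu, heq⟩ := (mOf_isLeast g hxy (hcont.mono (Icc_subset_Icc hx hy))).1
    rw [← heq]; exact hpos u ⟨hx.trans hu.1, hu.2.trans hy⟩
  -- generic evaluation of the fract formula
  have hgen : ∀ z : ℝ, 0 ≤ z → z ≤ 1 →
      g s₀ + g (Int.fract z) - 2 * mOf g s₀ (Int.fract z)
        = g s₀ + g z - 2 * mOf g s₀ z := by
    intro z hz0 hz1
    rcases lt_or_eq_of_le hz1 with h | h
    · rw [Int.fract_eq_self.mpr ⟨hz0, h⟩]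
    · rw [h, Int.fract_one, h0, h1, mOf_comm g s₀ 0, hm0x s₀ hs00 hs01,
        hmx1 s₀ hs00 hs01]
  have hF1 : ∀ r : ℝ, 0 ≤ r → s₀ + r ≤ 1 →
      g' r = g s₀ + g (s₀ + r) - 2 * mOf g s₀ (s₀ + r) := by
    intro r h0r h1r
    rw [hg' r]
    exact hgen (s₀ + r) (by linarith) h1r
  have hF2 : ∀ r : ℝ, 1 ≤ s₀ + r → r ≤ 1 →
      g' r = g s₀ + g (s₀ - 1 + r) - 2 * mOf g s₀ (s₀ - 1 + r) := by
    intro r h1r hr1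
    have hfr : Int.fract (s₀ + r) = Int.fract (s₀ - 1 + r) := by
      rw [show s₀ - 1 + r = s₀ + r - ((1 : ℤ) : ℝ) by push_cast; ring, Int.fract_sub_intCast]
    rw [hg' r, hfr]
    exact hgen (s₀ - 1 + r) (by linarith) (by linarith)
  -- conversion of fract inside dOf
  have hfd1 : ∀ z : ℝ, 0 ≤ z → z ≤ 1 → ∀ w : ℝ, 0 ≤ w → w ≤ 1 →
      dOf g (Int.fract z) w = dOf g z w := by
    intro z hz0 hz1 w hw0 hw1
    rcases lt_or_eq_of_le hz1 with h | h
    · rw [Int.fract_eq_self.mpr ⟨hz0, h⟩]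
    · rw [h, Int.fract_one]
      unfold dOf
      rw [mOf_comm g 1 w, hmx1 w hw0 hw1, hm0x w hw0 hw1, h0, h1]
  have hfd2 : ∀ z : ℝ, 0 ≤ z → z ≤ 1 → ∀ w : ℝ, 0 ≤ w → w ≤ 1 →
      dOf g (Int.fract z) (Int.fract w) = dOf g z w := by
    intro z hz0 hz1 w hw0 hw1
    rw [hfd1 z hz0 hz1 _ (Int.fract_nonneg w) (Int.fract_lt_one w).le,
        dOf_comm g z, hfd1 w hw0 hw1 z hz0 hz1, dOf_comm]
  -- Part (b), ordered version
  have hb : ∀ s ∈ Icc (0:ℝ) 1, ∀ t ∈ Icc (0:ℝ) 1, s ≤ t →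
      dOf g' s t = dOf g (Int.fract (s₀ + s)) (Int.fract (s₀ + t)) := by
    intro s hs t ht hst
    rcases le_or_gt (s₀ + t) 1 with hc1 | hc1
    · -- Case (i): no wrap
      set x := s₀ + s with hxdef
      set y := s₀ + t with hydef
      have hsx : s₀ ≤ x := by rw [hxdef]; linarith [hs.1]
      have hxy : x ≤ y := by rw [hxdef, hydef]; linarith
      have hy1 : y ≤ 1 := hc1
      have hx0 : 0 ≤ x := le_trans hs00 hsx
      set M := mOf g s₀ x with hMdef
      set c := mOf g x y with hcdef2
      have hcsy : ContinuousOn g (Icc s₀ y) := hcont.mono (Icc_subset_Icc hs00 hy1)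
      have hMle : M ≤ g x :=
        mOf_le g hsx (hcont.mono (Icc_subset_Icc hs00 (hxy.trans hy1))) (right_mem_Icc.mpr hsx)
      have hpt : ∀ r ∈ Icc s t, g' r
          = ((fun u => g s₀ + (g u - 2 * min M (mOf g x u))) ∘ (fun r => s₀ + r)) r := by
        intro r hr
        have h0r : 0 ≤ r := le_trans hs.1 hr.1
        have h1r : s₀ + r ≤ 1 := by linarith [hr.2]
        have hxr : x ≤ s₀ + r := by rw [hxdef]; linarith [hr.1]
        rw [hF1 r h0r h1r]
        have hsplit : mOf g s₀ (s₀ + r) = min M (mOf g x (s₀ + r)) :=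
          mOf_split g hsx hxr (hcsy.mono (Icc_subset_Icc le_rfl (by linarith [hr.2])))
        simp only [Function.comp]
        rw [hsplit]; ring
      have himg : g' '' Icc s t = (fun u => g s₀ + (g u - 2 * min M (mOf g x u))) '' Icc x y := by
        rw [image_congr hpt, image_comp, image_const_add_Icc]
      have hleast := isLeast_image_add (K := g s₀)
        (lemmaA g hxy (hcont.mono (Icc_subset_Icc hx0 hy1)) hMle)
      have hmg' : mOf g' s t = g s₀ + (c - M - min M c) := by
        unfold mOf
        rw [min_eq_left hst, max_eq_right hst, himg]
        exact hleast.csInf_eq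
      have hgs : g' s = g s₀ + g x - 2 * M := by
        rw [hF1 s hs.1 (by linarith)]
      have hgt : g' t = g s₀ + g y - 2 * mOf g s₀ y := by
        rw [hF1 t ht.1 hc1]
      have hsy : mOf g s₀ y = min M c := mOf_split g hsx hxy hcsy
      rw [hfd2 x hx0 (hxy.trans hy1) y (hx0.trans hxy) hy1]
      unfold dOf
      rw [hmg', hgs, hgt, hsy, ← hcdef2]
      ring
    · rcases le_or_gt 1 (s₀ + s) with hc2 | hc2
      · -- Case (ii): both wrapped
        set x := s₀ - 1 + s with hxdef
        set y := s₀ - 1 + t with hydef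
        have hx0 : 0 ≤ x := by rw [hxdef]; linarith
        have hxy : x ≤ y := by rw [hxdef, hydef]; linarith
        have hys : y ≤ s₀ := by rw [hydef]; linarith [ht.2]
        have hy1 : y ≤ 1 := hys.trans hs01
        set M := mOf g y s₀ with hMdef
        set c := mOf g x y with hcdef2
        have hcxs : ContinuousOn g (Icc x s₀) := hcont.mono (Icc_subset_Icc hx0 hs01)
        have hMle : M ≤ g y :=
          mOf_le g hys (hcont.mono (Icc_subset_Icc (hx0.trans hxy) hs01)) (left_mem_Icc.mpr hys)
        have hpt : ∀ r ∈ Icc s t, g' r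
            = ((fun u => g s₀ + (g u - 2 * min M (mOf g u y))) ∘ (fun r => s₀ - 1 + r)) r := by
          intro r hr
          have h1r : 1 ≤ s₀ + r := by linarith [hr.1]
          have hry : s₀ - 1 + r ≤ y := by rw [hydef]; linarith [hr.2]
          have hr0 : 0 ≤ s₀ - 1 + r := by linarith [hr.1]
          rw [hF2 r h1r (hr.2.trans ht.2)]
          have hsplit : mOf g (s₀ - 1 + r) s₀ = min (mOf g (s₀ - 1 + r) y) M :=
            mOf_split g hry hys (hcxs.mono (Icc_subset_Icc (by rw [hxdef]; linarith [hr.1]) le_rfl))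
          simp only [Function.comp]
          rw [mOf_comm g s₀ (s₀ - 1 + r), hsplit, min_comm]
          ring
        have himg : g' '' Icc s t
            = (fun u => g s₀ + (g u - 2 * min M (mOf g u y))) '' Icc x y := by
          rw [image_congr hpt, image_comp, image_const_add_Icc]
        have hleast := isLeast_image_add (K := g s₀)
          (lemmaA' g hxy (hcont.mono (Icc_subset_Icc hx0 hy1)) hMle)
        have hmg' : mOf g' s t = g s₀ + (c - M - min M c) := by
          unfold mOf
          rw [min_eq_left hst, max_eq_right hst, himg]
          exact hleast.csInf_eq
        have hgs : g' s = g s₀ + g x - 2 * mOf g s₀ x := by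
          rw [hF2 s hc2 (hs.2)]
        have hgt : g' t = g s₀ + g y - 2 * M := by
          rw [hF2 t (by linarith) ht.2, hMdef, mOf_comm g s₀ y]
        have hsx : mOf g s₀ x = min c M := by
          rw [mOf_comm g s₀ x, mOf_split g hxy hys hcxs]
        have hfx : Int.fract (s₀ + s) = Int.fract x := by
          rw [show s₀ + s = x + ((1 : ℤ) : ℝ) by rw [hxdef]; push_cast; ring, Int.fract_add_intCast]
        have hfy : Int.fract (s₀ + t) = Int.fract y := by
          rw [show s₀ + t = y + ((1 : ℤ) : ℝ) by rw [hydef]; push_cast; ring, Int.fract_add_intCast]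
        rw [hfx, hfy, hfd2 x hx0 (hxy.trans hy1) y (hx0.trans hxy) hy1]
        unfold dOf
        rw [hmg', hgs, hgt, hsx, ← hcdef2, min_comm M c]
        ring
      · -- Case (iii): wrap inside
        have hslt : s₀ + s < 1 := hc2
        have hs₀lt : s₀ < 1 := by linarith [hs.1]
        set x := s₀ + s with hxdef
        set b := s₀ - 1 + t with hbdef
        have hsx : s₀ ≤ x := by rw [hxdef]; linarith [hs.1]
        have hx0 : 0 ≤ x := hs00.trans hsx
        have hx1 : x ≤ 1 := hslt.le
        have hb0 : 0 ≤ b := by rw [hbdef]; linarith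
        have hbs : b ≤ s₀ := by rw [hbdef]; linarith [ht.2]
        set M₁ := mOf g s₀ x with hM₁def
        set M₂ := mOf g b s₀ with hM₂def
        have hM₁le : M₁ ≤ g x :=
          mOf_le g hsx (hcont.mono (Icc_subset_Icc hs00 hx1)) (right_mem_Icc.mpr hsx)
        have hM₂le : M₂ ≤ g b :=
          mOf_le g hbs (hcont.mono (Icc_subset_Icc hb0 hs01)) (left_mem_Icc.mpr hbs)
        have hM₁0 : 0 ≤ M₁ := hmnn s₀ x hs00 hsx hx1
        have hM₂0 : 0 ≤ M₂ := hmnn b s₀ hb0 hbs hs01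
        set μ := 1 - s₀ with hμdef
        have hsμ : s ≤ μ := by rw [hμdef]; linarith
        have hμt : μ ≤ t := by rw [hμdef]; linarith
        -- piece 1
        have hpt1 : ∀ r ∈ Icc s μ, g' r
            = ((fun u => g s₀ + (g u - 2 * min M₁ (mOf g x u))) ∘ (fun r => s₀ + r)) r := by
          intro r hr
          have h0r : 0 ≤ r := le_trans hs.1 hr.1
          have h1r : s₀ + r ≤ 1 := by rw [hμdef] at hr; linarith [hr.2]
          have hxr : x ≤ s₀ + r := by rw [hxdef]; linarith [hr.1]
          rw [hF1 r h0r h1r]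
          have hsplit : mOf g s₀ (s₀ + r) = min M₁ (mOf g x (s₀ + r)) :=
            mOf_split g hsx hxr (hcont.mono (Icc_subset_Icc hs00 h1r))
          simp only [Function.comp]
          rw [hsplit]; ring
        have himg1 : g' '' Icc s μ
            = (fun u => g s₀ + (g u - 2 * min M₁ (mOf g x u))) '' Icc x 1 := by
          rw [image_congr hpt1, image_comp, image_const_add_Icc,
            show s₀ + μ = 1 by rw [hμdef]; ring, ← hxdef]
        have hleast1 := isLeast_image_add (K := g s₀)
          (lemmaA g hx1 (hcont.mono (Icc_subset_Icc hx0 le_rfl)) hM₁le)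
        rw [hmx1 x hx0 hx1, min_eq_right hM₁0] at hleast1
        -- piece 2
        have hpt2 : ∀ r ∈ Icc μ t, g' r
            = ((fun u => g s₀ + (g u - 2 * min M₂ (mOf g u b))) ∘ (fun r => s₀ - 1 + r)) r := by
          intro r hr
          have h1r : 1 ≤ s₀ + r := by rw [hμdef] at hr; linarith [hr.1]
          have hrb : s₀ - 1 + r ≤ b := by rw [hbdef]; linarith [hr.2]
          have hr0 : 0 ≤ s₀ - 1 + r := by linarith
          rw [hF2 r h1r (hr.2.trans ht.2)]
          have hsplit : mOf g (s₀ - 1 + r) s₀ = min (mOf g (s₀ - 1 + r) b) M₂ :=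
            mOf_split g hrb hbs (hcont.mono (Icc_subset_Icc hr0 hs01))
          simp only [Function.comp]
          rw [mOf_comm g s₀ (s₀ - 1 + r), hsplit, min_comm]
          ring
        have himg2 : g' '' Icc μ t
            = (fun u => g s₀ + (g u - 2 * min M₂ (mOf g u b))) '' Icc 0 b := by
          rw [image_congr hpt2, image_comp, image_const_add_Icc,
            show s₀ - 1 + μ = 0 by rw [hμdef]; ring, ← hbdef]
        have hleast2 := isLeast_image_add (K := g s₀)
          (lemmaA' g hb0 (hcont.mono (Icc_subset_Icc le_rfl (hbs.trans hs01))) hM₂le)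
        rw [hm0x b hb0 (hbs.trans hs01), min_eq_right hM₂0] at hleast2
        -- combine
        have hmg' : mOf g' s t = min (g s₀ + (0 - M₁ - 0)) (g s₀ + (0 - M₂ - 0)) := by
          unfold mOf
          rw [min_eq_left hst, max_eq_right hst,
            ← Icc_union_Icc_eq_Icc hsμ hμt, image_union, himg1, himg2]
          exact (hleast1.union hleast2).csInf_eq
        have hgs : g' s = g s₀ + g x - 2 * M₁ := by
          rw [hF1 s hs.1 hx1]
        have hgt : g' t = g s₀ + g b - 2 * M₂ := by
          rw [hF2 t (by linarith) ht.2, hM₂def, mOf_comm g s₀ b]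
        have hfx : Int.fract (s₀ + s) = x := Int.fract_eq_self.mpr ⟨hx0, hslt⟩
        have hfb : Int.fract (s₀ + t) = b := by
          rw [show s₀ + t = b + ((1 : ℤ) : ℝ) by rw [hbdef]; push_cast; ring, Int.fract_add_intCast]
          exact Int.fract_eq_self.mpr ⟨hb0, lt_of_le_of_lt hbs hs₀lt⟩
        have hmxb : mOf g x b = min M₂ M₁ := by
          rw [mOf_comm g x b, mOf_split g hbs hsx (hcont.mono (Icc_subset_Icc hb0 hx1))]
        rw [hfx, hfb]
        unfold dOf
        rw [hmg', hgs, hgt, hmxb]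
        rcases le_total M₁ M₂ with h | h
        · rw [min_eq_right (by linarith : g s₀ + (0 - M₂ - 0) ≤ g s₀ + (0 - M₁ - 0)),
            min_eq_right h]
          ring
        · rw [min_eq_left (by linarith : g s₀ + (0 - M₁ - 0) ≤ g s₀ + (0 - M₂ - 0)),
            min_eq_left h]
          ring
  have hB : ∀ s ∈ Icc (0:ℝ) 1, ∀ t ∈ Icc (0:ℝ) 1,
      dOf g' s t = dOf g (Int.fract (s₀ + s)) (Int.fract (s₀ + t)) := by
    intro s hs t ht
    rcases le_total s t with h | h
    · exact hb s hs t ht h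
    · rw [dOf_comm g', dOf_comm g]; exact hb t ht s hs h
  -- triangle inequality machinery
  have hcc : ∀ a b : ℝ, a ∈ Icc (0:ℝ) 1 → b ∈ Icc (0:ℝ) 1 →
      ContinuousOn g (Icc (min a b) (max a b)) := fun a b ha hb =>
    hcont.mono (Icc_subset_Icc (le_min ha.1 hb.1) (max_le ha.2 hb.2))
  have htri0 : ∀ a b c : ℝ, a ∈ Icc (0:ℝ) 1 → b ∈ Icc (0:ℝ) 1 → c ∈ Icc (0:ℝ) 1 → a ≤ c →
      dOf g a c ≤ dOf g a b + dOf g b c := by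
    intro a b c ha hb hcm hac
    have h1 : mOf g a b ≤ g b := mOf_le' g (hcc a b ha hb) ⟨min_le_right a b, le_max_right a b⟩
    have h2 : mOf g b c ≤ g b := mOf_le' g (hcc b c hb hcm) ⟨min_le_left b c, le_max_left b c⟩
    have h3 : min (mOf g a b) (mOf g b c) ≤ mOf g a c := by
      obtain ⟨u, hu, heq⟩ := mOf_mem g a c (hcc a c ha hcm)
      rw [min_eq_left hac, max_eq_right hac] at hu
      rw [← heq]
      rcases le_total u b with h | h
      · exact le_trans (min_le_left _ _) (mOf_le' g (hcc a b ha hb)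
          ⟨le_trans (min_le_left a b) hu.1, le_trans h (le_max_right a b)⟩)
      · exact le_trans (min_le_right _ _) (mOf_le' g (hcc b c hb hcm)
          ⟨le_trans (min_le_left b c) h, le_trans hu.2 (le_max_right b c)⟩)
    unfold dOf
    rcases le_total (mOf g a b) (mOf g b c) with h | h
    · rw [min_eq_left h] at h3; linarith
    · rw [min_eq_right h] at h3; linarith
  have htri : ∀ a b c : ℝ, a ∈ Icc (0:ℝ) 1 → b ∈ Icc (0:ℝ) 1 → c ∈ Icc (0:ℝ) 1 →
      dOf g a c ≤ dOf g a b + dOf g b c := by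
    intro a b c ha hb hcm
    rcases le_total a c with h | h
    · exact htri0 a b c ha hb hcm h
    · rw [dOf_comm g a c, dOf_comm g a b, dOf_comm g b c, add_comm]
      exact htri0 c b a hcm hb ha h
  have hd01 : dOf g 0 1 = 0 := by
    unfold dOf; rw [hm0x 1 zero_le_one le_rfl, h0, h1]; ring
  have hUC : ∀ ε : ℝ, 0 < ε → ∃ δ : ℝ, 0 < δ ∧ ∀ a b : ℝ, a ∈ Icc (0:ℝ) 1 → b ∈ Icc (0:ℝ) 1 →
      |a - b| < δ → dOf g a b < ε := by
    intro ε hε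
    have huc : UniformContinuousOn g (Icc 0 1) :=
      isCompact_Icc.uniformContinuousOn_of_continuous hcont
    rw [Metric.uniformContinuousOn_iff] at huc
    obtain ⟨δ, hδ, hδ'⟩ := huc (ε/3) (by linarith)
    refine ⟨δ, hδ, ?_⟩
    intro a b ha hb hab
    obtain ⟨v, hv, heq⟩ := mOf_mem g a b (hcc a b ha hb)
    have hvI : v ∈ Icc (0:ℝ) 1 :=
      ⟨le_trans (le_min ha.1 hb.1) hv.1, le_trans hv.2 (max_le ha.2 hb.2)⟩
    have hminmax : max a b - min a b = |a - b| := by rw [max_sub_min_eq_abs, abs_sub_comm]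
    have hav : |a - v| < δ := by
      have h1 : |a - v| ≤ |a - b| := by
        rw [← hminmax, abs_le]
        constructor <;> linarith [hv.1, hv.2, min_le_left a b, le_max_left a b]
      exact lt_of_le_of_lt h1 hab
    have hbv : |b - v| < δ := by
      have h1 : |b - v| ≤ |a - b| := by
        rw [← hminmax, abs_le]
        constructor <;> linarith [hv.1, hv.2, min_le_right a b, le_max_right a b]
      exact lt_of_le_of_lt h1 hab
    have hga := hδ' a ha v hvI (by rwa [Real.dist_eq])
    have hgb := hδ' b hb v hvI (by rwa [Real.dist_eq])
    rw [Real.dist_eq] at hga hgb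
    have hga' := (abs_lt.1 hga).2
    have hgb' := (abs_lt.1 hgb).2
    unfold dOf
    rw [← heq]
    linarith
  -- continuity of g'
  have hca : ContinuousOn g' (Icc 0 1) := by
    intro r hrI
    rw [Metric.continuousWithinAt_iff]
    intro ε hε
    obtain ⟨δ, hδpos, hδ⟩ := hUC (ε/4) (by linarith)
    refine ⟨min δ (1/2), by positivity, ?_⟩
    intro r' hr'I hdist0
    rw [Real.dist_eq] at hdist0
    have hdδ : |r' - r| < δ := lt_of_lt_of_le hdist0 (min_le_left _ _)
    have hd2 : |r' - r| < 1/2 := lt_of_lt_of_le hdist0 (min_le_right _ _)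
    have habs2 := abs_lt.1 hd2
    have habsδ := abs_lt.1 hdδ
    set a := Int.fract (s₀ + r') with hadef
    set a' := Int.fract (s₀ + r) with ha'def
    have haI : a ∈ Icc (0:ℝ) 1 := ⟨Int.fract_nonneg _, (Int.fract_lt_one _).le⟩
    have ha'I : a' ∈ Icc (0:ℝ) 1 := ⟨Int.fract_nonneg _, (Int.fract_lt_one _).le⟩
    have halt1 : a < 1 := Int.fract_lt_one _
    have ha'lt1 : a' < 1 := Int.fract_lt_one _
    have hbound : dOf g a a' < ε := by
      have hfr : a - a' = (r' - r) - ((⌊s₀ + r'⌋ - ⌊s₀ + r⌋ : ℤ) : ℝ) := by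
        rw [hadef, ha'def, Int.fract, Int.fract]; push_cast; ring
      have hfl1 : ⌊s₀ + r'⌋ ≤ ⌊s₀ + r⌋ + 1 := by
        have h' : s₀ + r' ≤ s₀ + r + 1 := by linarith [habs2.1, habs2.2]
        calc ⌊s₀ + r'⌋ ≤ ⌊s₀ + r + 1⌋ := Int.floor_le_floor h'
          _ = ⌊s₀ + r⌋ + 1 := Int.floor_add_one _
      have hfl2 : ⌊s₀ + r⌋ ≤ ⌊s₀ + r'⌋ + 1 := by
        have h' : s₀ + r ≤ s₀ + r' + 1 := by linarith [habs2.1, habs2.2]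
        calc ⌊s₀ + r⌋ ≤ ⌊s₀ + r' + 1⌋ := Int.floor_le_floor h'
          _ = ⌊s₀ + r'⌋ + 1 := Int.floor_add_one _
      have hk : ⌊s₀ + r'⌋ - ⌊s₀ + r⌋ = 0 ∨ ⌊s₀ + r'⌋ - ⌊s₀ + r⌋ = 1 ∨
          ⌊s₀ + r'⌋ - ⌊s₀ + r⌋ = -1 := by omega
      rcases hk with h | h | h
      · have heq0 : |a - a'| < δ := by
          rw [hfr, h]; push_cast; simpa using hdδ
        have := hδ a a' haI ha'I heq0
        linarith
      · have he : a - a' = (r' - r) - 1 := by rw [hfr, h]; norm_num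
        have halt : a < δ := by linarith [ha'lt1, habsδ.2]
        have ha'gt : 1 - δ < a' := by linarith [haI.1, habsδ.2]
        have h1' : dOf g a 0 < ε/4 := hδ a 0 haI ⟨le_rfl, zero_le_one⟩
          (by rw [sub_zero, abs_of_nonneg haI.1]; exact halt)
        have h2' : dOf g 1 a' < ε/4 := hδ 1 a' ⟨zero_le_one, le_rfl⟩ ha'I
          (by rw [abs_of_nonneg (by linarith : (0:ℝ) ≤ 1 - a')]; linarith)
        have t1 : dOf g a a' ≤ dOf g a 0 + dOf g 0 a' :=
          htri a 0 a' haI ⟨le_rfl, zero_le_one⟩ ha'I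
        have t2 : dOf g 0 a' ≤ dOf g 0 1 + dOf g 1 a' :=
          htri 0 1 a' ⟨le_rfl, zero_le_one⟩ ⟨zero_le_one, le_rfl⟩ ha'I
        rw [hd01] at t2
        linarith
      · have he : a - a' = (r' - r) + 1 := by
          rw [hfr, h]; push_cast; ring
        have ha'lt : a' < δ := by linarith [halt1, habsδ.1]
        have hagt : 1 - δ < a := by linarith [ha'I.1, habsδ.1]
        have h1' : dOf g a 1 < ε/4 := hδ a 1 haI ⟨zero_le_one, le_rfl⟩
          (by rw [abs_of_nonpos (by linarith : a - 1 ≤ 0)]; linarith)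
        have h2' : dOf g 0 a' < ε/4 := hδ 0 a' ⟨le_rfl, zero_le_one⟩ ha'I
          (by rw [abs_of_nonpos (by linarith [ha'I.1] : 0 - a' ≤ 0)]; linarith [ha'I.1])
        have t1 : dOf g a a' ≤ dOf g a 1 + dOf g 1 a' :=
          htri a 1 a' haI ⟨zero_le_one, le_rfl⟩ ha'I
        have t2 : dOf g 1 a' ≤ dOf g 1 0 + dOf g 0 a' :=
          htri 1 0 a' ⟨zero_le_one, le_rfl⟩ ⟨le_rfl, zero_le_one⟩ ha'I
        have hd10 : dOf g 1 0 = 0 := by rw [dOf_comm]; exact hd01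
        rw [hd10] at t2
        linarith
    have e1 : g' r' = dOf g s₀ a := by rw [hg' r']; rfl
    have e2 : g' r = dOf g s₀ a' := by rw [hg' r]; rfl
    rw [Real.dist_eq, e1, e2]
    have t1 := htri s₀ a' a hs₀ ha'I haI
    have t2 := htri s₀ a a' hs₀ haI ha'I
    have hcm1 := dOf_comm g a' a
    rw [abs_lt]
    constructor <;> linarith
  -- endpoint values
  have hg'0 : g' 0 = 0 := by
    rw [hg' 0, show s₀ + 0 = s₀ by ring, hgen s₀ hs00 hs01, mOf_self]; ring
  have hg'1 : g' 1 = 0 := by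
    rw [hg' 1, show s₀ + 1 = s₀ + ((1:ℤ):ℝ) by push_cast; ring, Int.fract_add_intCast,
      hgen s₀ hs00 hs01, mOf_self]
    ring
  refine ⟨⟨hca, hg'0, hg'1⟩, hB, ?_⟩
  -- Part (c)
  set q : Icc (0:ℝ) 1 → T := fun s =>
    p ⟨Int.fract (s₀ + ↑s), ⟨Int.fract_nonneg _, (Int.fract_lt_one _).le⟩⟩ with hqdef
  have hqd : ∀ s t : Icc (0:ℝ) 1, dist (q s) (q t) = dOf g' ↑s ↑t := by
    intro s t
    rw [hqdef]
    simp only []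
    rw [hdist]
    exact (hB ↑s s.2 ↑t t.2).symm
  have hkey : ∀ s t : Icc (0:ℝ) 1, p' s = p' t → q s = q t := by
    intro s t h
    have h2 := hdist' s t
    rw [h, dist_self] at h2
    have h3 : dist (q s) (q t) = 0 := by rw [hqd]; exact h2.symm
    exact eq_of_dist_eq_zero h3
  refine ⟨fun x => q (hsurj' x).choose, ⟨?_, ?_, ?_⟩, ?_⟩
  · refine Isometry.of_dist_eq ?_
    intro x y
    have hx := (hsurj' x).choose_spec
    have hy := (hsurj' y).choose_spec
    rw [hqd, ← hdist', hx, hy]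
  · intro z
    obtain ⟨u, hu⟩ := hsurj z
    have hsI : Int.fract (↑u - s₀) ∈ Icc (0:ℝ) 1 :=
      ⟨Int.fract_nonneg _, (Int.fract_lt_one _).le⟩
    refine ⟨p' ⟨Int.fract (↑u - s₀), hsI⟩, ?_⟩
    have hRp : q ((hsurj' (p' ⟨Int.fract (↑u - s₀), hsI⟩)).choose)
        = q ⟨Int.fract (↑u - s₀), hsI⟩ :=
      hkey _ _ (hsurj' (p' ⟨Int.fract (↑u - s₀), hsI⟩)).choose_spec
    have he1 : Int.fract (s₀ + Int.fract (↑u - s₀)) = Int.fract ↑u := by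
      rw [show s₀ + Int.fract (↑u - s₀) = ↑u - ((⌊↑u - s₀⌋ : ℤ) : ℝ) by
        rw [Int.fract]; ring, Int.fract_sub_intCast]
    have he2 : q ⟨Int.fract (↑u - s₀), hsI⟩
        = p ⟨Int.fract ↑u, ⟨Int.fract_nonneg _, (Int.fract_lt_one _).le⟩⟩ := by
      rw [hqdef]
      simp only []
      congr 1
      exact Subtype.ext he1
    have he3 : p ⟨Int.fract ↑u, ⟨Int.fract_nonneg _, (Int.fract_lt_one _).le⟩⟩ = p u := by
      refine eq_of_dist_eq_zero ?_
      rw [hdist]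
      show dOf g (Int.fract ↑u) ↑u = 0
      rw [hfd1 ↑u u.2.1 u.2.2 ↑u u.2.1 u.2.2]
      unfold dOf; rw [mOf_self]; ring
    show q ((hsurj' (p' ⟨Int.fract (↑u - s₀), hsI⟩)).choose) = z
    rw [hRp, he2, he3, hu]
  · intro s
    exact hkey _ _ (hsurj' (p' s)).choose_spec
  · intro R2 hR2
    obtain ⟨hiso2, hsurj2, hprop2⟩ := hR2
    funext x
    have hx := (hsurj' x).choose_spec
    rw [← hx, hprop2]
    exact (hkey _ _ (hsurj' (p' ((hsurj' x).choose))).choose_spec).symm
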